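/- Main theorem (combinatorial form): Let n ≥ 1, let h : ℤ × ℤ → ℤ vanish for p < 0 or p > 2n or q < 0 or q > 2n and satisfy h(p,q) = h(2n−p,q). Let K be a field, y ∈ K nonzero, t = y + y^{-1}, and let t_r be defined by t_0 = 0, t_1 = 1, t_{r+1} = t·t_r − t_{r−1} (with t_r = 0 for r < 0). Then Σ_{q=0}^{2n} Σ_{p=0}^{n} (−1)^{p+q} t_{n−p+1} (h(p,q) − h(p−2,q)) = y^{-n} · Σ_{p=0}^{2n} Σ_{q=0}^{2n} (−1)^{p+q} h(p,q) y^p. -/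
import Mathlib


open Finset in
theorem hyperkaehler_chi_y_supertrace {K : Type*} [Field K] (n : ℕ) (hn : 1 ≤ n)
    (h : ℤ × ℤ → ℤ)
    (hvanish : ∀ p q : ℤ, (p < 0 ∨ 2 * n < p ∨ q < 0 ∨ 2 * n < q) → h (p, q) = 0)
    (hserre : ∀ p q : ℤ, h (p, q) = h (2 * n - p, q))
    (y : K) (hy : y ≠ 0) (t : K) (ht : t = y + y⁻¹)
    (T : ℤ → K) (hTneg : ∀ r : ℤ, r ≤ 0 → T r = 0) (hT1 : T 1 = 1)
    (hrec : ∀ r : ℤ, 1 ≤ r → T (r + 1) = t * T r - T (r - 1)) :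
    ∑ q ∈ range (2 * n + 1), ∑ p ∈ range (n + 1),
        (-1 : K) ^ (p + q) * T ((n : ℤ) - p + 1) * ((h (p, q) : K) - (h ((p : ℤ) - 2, q) : K)) =
    y ^ (-(n : ℤ)) *
      ∑ p ∈ range (2 * n + 1), ∑ q ∈ range (2 * n + 1),
        (-1 : K) ^ (p + q) * (h (p, q) : K) * y ^ (p : ℕ) := by
  obtain ⟨m, rfl⟩ : ∃ m, n = m + 1 := ⟨n - 1, by omega⟩
  set z := y⁻¹ with hzdef
  have hyz : y * z = 1 := mul_inv_cancel₀ hy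
  have hT0 : T 0 = 0 := hTneg 0 le_rfl
  have hTm1 : T (-1) = 0 := hTneg (-1) (by norm_num)
  have hT2 : T 2 = t := by
    have e := hrec 1 le_rfl
    norm_num [hT1, hT0] at e
    exact e
  -- Chebyshev-type key identity
  have key : ∀ k : ℕ, T ((k : ℤ) + 2) - T (k : ℤ) = y ^ (k + 1) + z ^ (k + 1) := by
    intro k
    induction k using Nat.twoStepInduction with
    | zero =>
      norm_num [hT2, hT0, ht, hzdef]
    | one =>
      have e3 := hrec 2 (by norm_num)
      norm_num at e3
      push_cast
      rw [e3, hT2, hT1, ht, hzdef]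
      linear_combination (2 : K) * hyz
    | more k ih1 ih2 =>
      have e1 := hrec ((k : ℤ) + 3) (by omega)
      rw [show (k : ℤ) + 3 + 1 = (k : ℤ) + 4 by ring,
          show (k : ℤ) + 3 - 1 = (k : ℤ) + 2 by ring] at e1
      have e2 := hrec ((k : ℤ) + 1) (by omega)
      rw [show (k : ℤ) + 1 + 1 = (k : ℤ) + 2 by ring,
          show (k : ℤ) + 1 - 1 = (k : ℤ) by ring] at e2
      have ih2' : T ((k : ℤ) + 3) - T ((k : ℤ) + 1) = y ^ (k + 2) + z ^ (k + 2) := by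
        push_cast at ih2
        rw [show ((k : ℤ) + 1 + 2) = (k : ℤ) + 3 by ring] at ih2
        convert ih2 using 2
      push_cast
      rw [show ((k : ℤ) + 2 + 2) = (k : ℤ) + 4 by ring]
      rw [ht] at e1 e2
      rw [show (k + 2 + 1) = k + 3 by ring]
      linear_combination e1 - e2 + (y + z) * ih2' - ih1 + (y ^ (k + 1) + z ^ (k + 1)) * hyz
  -- shift-by-two lemma
  have shift2 : ∀ (F : ℕ → K) (k : ℕ),
      ∑ p ∈ range (k + 1 + 1), F p = (∑ p ∈ range k, F (p + 2)) + F 1 + F 0 := by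
    intro F k
    rw [Finset.sum_range_succ' F (k + 1), Finset.sum_range_succ' (fun i => F (i + 1)) k]
  -- rearrange RHS and reduce to a per-q identity
  rw [Finset.mul_sum]
  simp_rw [Finset.mul_sum]
  conv_rhs => rw [Finset.sum_comm]
  refine Finset.sum_congr rfl fun q _ => ?_
  clear hn
  -- abbreviations as facts
  have hA0 : ∀ p : ℤ, p < 0 → ((h (p, (q : ℤ)) : ℤ) : K) = 0 := by
    intro p hp
    rw [hvanish p q (Or.inl hp)]
    norm_num
  have hAs : ∀ j : ℕ, ((h (2 * (m : ℤ) + 2 - (j : ℤ), (q : ℤ)) : ℤ) : K) = ((h ((j : ℤ), (q : ℤ)) : ℤ) : K) := by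
    intro j
    rw [show 2 * (m : ℤ) + 2 - (j : ℤ) = 2 * ((m + 1 : ℕ) : ℤ) - (j : ℤ) by push_cast; ring,
      ← hserre]
  have key' : ∀ p : ℕ, p < m + 1 →
      T (((m + 1 : ℕ) : ℤ) - (p : ℤ) + 1) - T ((m : ℤ) - (p : ℤ)) = y ^ (m + 1 - p) + z ^ (m + 1 - p) := by
    intro p hp
    rw [show ((m + 1 : ℕ) : ℤ) - (p : ℤ) + 1 = ((m - p : ℕ) : ℤ) + 2 by omega,
      show (m : ℤ) - (p : ℤ) = ((m - p : ℕ) : ℤ) by omega,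
      key (m - p), show m - p + 1 = m + 1 - p by omega]
  -- shifted sum equality
  have e1 : ∑ p ∈ range (m + 1 + 1), (-1 : K) ^ (p + q) * T (((m + 1 : ℕ) : ℤ) - (p : ℤ) + 1) * ((h ((p : ℤ) - 2, (q : ℤ)) : ℤ) : K)
      = ∑ p ∈ range (m + 1 + 1), (-1 : K) ^ (p + q) * T ((m : ℤ) - (p : ℤ)) * ((h ((p : ℤ), (q : ℤ)) : ℤ) : K) := by
    rw [shift2 (fun p => (-1 : K) ^ (p + q) * T (((m + 1 : ℕ) : ℤ) - (p : ℤ) + 1) * ((h ((p : ℤ) - 2, (q : ℤ)) : ℤ) : K)) m,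
      Finset.sum_range_succ (fun p => (-1 : K) ^ (p + q) * T ((m : ℤ) - (p : ℤ)) * ((h ((p : ℤ), (q : ℤ)) : ℤ) : K)) (m + 1),
      Finset.sum_range_succ (fun p => (-1 : K) ^ (p + q) * T ((m : ℤ) - (p : ℤ)) * ((h ((p : ℤ), (q : ℤ)) : ℤ) : K)) m]
    rw [hA0 (((0 : ℕ) : ℤ) - 2) (by norm_num), hA0 (((1 : ℕ) : ℤ) - 2) (by norm_num),
      show (m : ℤ) - ((m : ℕ) : ℤ) = 0 by omega,
      show (m : ℤ) - ((m + 1 : ℕ) : ℤ) = -1 by omega, hT0, hTm1]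
    simp only [mul_zero, zero_mul, add_zero]
    refine Finset.sum_congr rfl fun p hp => ?_
    rw [show ((p + 2 : ℕ) : ℤ) - 2 = (p : ℤ) by omega,
      show ((m + 1 : ℕ) : ℤ) - ((p + 2 : ℕ) : ℤ) + 1 = (m : ℤ) - (p : ℤ) by omega,
      show p + 2 + q = p + q + 2 by omega, pow_add, neg_one_sq]
    ring
  -- transform the LHS
  have L : ∑ p ∈ range (m + 1 + 1),
      (-1 : K) ^ (p + q) * T (((m + 1 : ℕ) : ℤ) - (p : ℤ) + 1) * ((h (p, q) : K) - (h ((p : ℤ) - 2, q) : K))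
      = ((∑ p ∈ range (m + 1), (-1 : K) ^ (p + q) * (h (p, q) : K) * y ^ (m + 1 - p))
        + ∑ p ∈ range (m + 1), (-1 : K) ^ (p + q) * (h (p, q) : K) * z ^ (m + 1 - p))
        + (-1 : K) ^ (m + 1 + q) * (h ((m + 1 : ℕ), q) : K) := by
    calc ∑ p ∈ range (m + 1 + 1),
        (-1 : K) ^ (p + q) * T (((m + 1 : ℕ) : ℤ) - (p : ℤ) + 1) * ((h (p, q) : K) - (h ((p : ℤ) - 2, q) : K))
        = (∑ p ∈ range (m + 1 + 1), (-1 : K) ^ (p + q) * T (((m + 1 : ℕ) : ℤ) - (p : ℤ) + 1) * (h (p, q) : K))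
          - ∑ p ∈ range (m + 1 + 1), (-1 : K) ^ (p + q) * T (((m + 1 : ℕ) : ℤ) - (p : ℤ) + 1) * ((h ((p : ℤ) - 2, q) : ℤ) : K) := by
          rw [← Finset.sum_sub_distrib]
          exact Finset.sum_congr rfl fun p _ => by ring
      _ = ∑ p ∈ range (m + 1 + 1),
            (-1 : K) ^ (p + q) * (h (p, q) : K) * (T (((m + 1 : ℕ) : ℤ) - (p : ℤ) + 1) - T ((m : ℤ) - (p : ℤ))) := by
          rw [e1, ← Finset.sum_sub_distrib]
          exact Finset.sum_congr rfl fun p _ => by ring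
      _ = (∑ p ∈ range (m + 1), (-1 : K) ^ (p + q) * (h (p, q) : K) * (y ^ (m + 1 - p) + z ^ (m + 1 - p)))
          + (-1 : K) ^ (m + 1 + q) * (h ((m + 1 : ℕ), q) : K) := by
          rw [Finset.sum_range_succ]
          congr 1
          · exact Finset.sum_congr rfl fun p hp => by rw [key' p (Finset.mem_range.mp hp)]
          · rw [show ((m + 1 : ℕ) : ℤ) - ((m + 1 : ℕ) : ℤ) + 1 = 1 by omega,
              show (m : ℤ) - ((m + 1 : ℕ) : ℤ) = -1 by omega, hT1, hTm1]
            ring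
      _ = _ := by
          rw [← Finset.sum_add_distrib]
          congr 1
          exact Finset.sum_congr rfl fun p _ => by ring
  -- transform the RHS
  have R : ∑ p ∈ range (2 * (m + 1) + 1),
      y ^ (-((m + 1 : ℕ) : ℤ)) * ((-1 : K) ^ (p + q) * (h (p, q) : K) * y ^ p)
      = ((∑ p ∈ range (m + 1), (-1 : K) ^ (p + q) * (h (p, q) : K) * z ^ (m + 1 - p))
          + (-1 : K) ^ (m + 1 + q) * (h ((m + 1 : ℕ), q) : K))
        + ∑ p ∈ range (m + 1), (-1 : K) ^ (p + q) * (h (p, q) : K) * y ^ (m + 1 - p) := by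
    rw [← Finset.sum_range_add_sum_Ico
        (fun p => y ^ (-((m + 1 : ℕ) : ℤ)) * ((-1 : K) ^ (p + q) * (h (p, q) : K) * y ^ p))
        (by omega : m + 1 + 1 ≤ 2 * (m + 1) + 1),
      Finset.sum_Ico_eq_sum_range]
    congr 1
    · -- first chunk
      rw [Finset.sum_range_succ]
      congr 1
      · refine Finset.sum_congr rfl fun p hp => ?_
        have hpow : y ^ (-((m + 1 : ℕ) : ℤ)) * y ^ p = z ^ (m + 1 - p) := by
          rw [hzdef, inv_pow, ← zpow_natCast y (m + 1 - p), ← zpow_neg,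
            ← zpow_natCast y p, ← zpow_add₀ hy]
          congr 1
          have := Finset.mem_range.mp hp
          omega
        linear_combination ((-1 : K) ^ (p + q) * ((h ((p : ℤ), (q : ℤ)) : ℤ) : K)) * hpow
      · have hpow : y ^ (-((m + 1 : ℕ) : ℤ)) * y ^ (m + 1) = 1 := by
          rw [← zpow_natCast y (m + 1), zpow_neg, inv_mul_cancel₀ (zpow_ne_zero _ hy)]
        linear_combination ((-1 : K) ^ (m + 1 + q) * ((h (((m + 1 : ℕ) : ℤ), (q : ℤ)) : ℤ) : K)) * hpow
    · -- second chunk: reflect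
      rw [show 2 * (m + 1) + 1 - (m + 1 + 1) = m + 1 by omega]
      rw [← Finset.sum_range_reflect
        (fun i => y ^ (-((m + 1 : ℕ) : ℤ)) * ((-1 : K) ^ ((m + 1 + 1 + i) + q) * (h ((m + 1 + 1 + i : ℕ), q) : K) * y ^ (m + 1 + 1 + i))) (m + 1)]
      refine Finset.sum_congr rfl fun j hj => ?_
      have hj' : j < m + 1 := Finset.mem_range.mp hj
      have hpow : y ^ (-((m + 1 : ℕ) : ℤ)) * y ^ (m + 1 + 1 + (m + 1 - 1 - j)) = y ^ (m + 1 - j) := by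
        rw [← zpow_natCast y (m + 1 + 1 + (m + 1 - 1 - j)), ← zpow_natCast y (m + 1 - j),
          ← zpow_add₀ hy]
        congr 1
        omega
      rw [show ((m + 1 + 1 + (m + 1 - 1 - j) : ℕ) : ℤ) = 2 * (m : ℤ) + 2 - (j : ℤ) by omega,
        hAs j,
        show m + 1 + 1 + (m + 1 - 1 - j) + q = 2 * (m + 1 - j) + (j + q) by omega,
        pow_add, pow_mul, neg_one_sq, one_pow, one_mul]
      linear_combination ((-1 : K) ^ (j + q) * ((h ((j : ℤ), (q : ℤ)) : ℤ) : K)) * hpow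
  rw [L, R]
  ring
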